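/- For all n ∈ ℙ and I ⊆ [n-1], the signed generating function over the quotient equals that over the chessboard elements of the quotient: Σ_{σ ∈ S_n^I} (-1)^{ℓ(σ)} x^{L(σ)} = Σ_{σ ∈ C_n^I} (-1)^{ℓ(σ)} x^{L(σ)}. -/

import Mathlib

open Finset Polynomial
open scoped Classical

/-- Number of inversions (Coxeter length) of a permutation of `Fin n`. -/
def ellA (n : ℕ) (σ : Equiv.Perm (Fin n)) : ℕ :=
  (Finset.univ.filter (fun p : Fin n × Fin n => p.1 < p.2 ∧ σ p.2 < σ p.1)).card

/-- The odd length: inversions `(i,j)` with `i ≢ j (mod 2)`. -/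
def oddLA (n : ℕ) (σ : Equiv.Perm (Fin n)) : ℕ :=
  (Finset.univ.filter (fun p : Fin n × Fin n =>
    p.1 < p.2 ∧ σ p.2 < σ p.1 ∧ (p.1 : ℕ) % 2 ≠ (p.2 : ℕ) % 2)).card

/-- Membership in the right quotient `S_n^I` (generators indexed 1-based by `I ⊆ [n-1]`):
no descent at any position of `I`. Position `k ∈ I` (1-based) compares the values at the
0-based positions `k-1` and `k`. -/
def inQuotA (n : ℕ) (I : Finset ℕ) (σ : Equiv.Perm (Fin n)) : Prop :=
  ∀ i j : Fin n, (j : ℕ) = (i : ℕ) + 1 → (i : ℕ) + 1 ∈ I → σ i < σ j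

/-- Even chessboard elements: `i + σ(i)` is even for all `i` (0- or 1-based is equivalent). -/
def chessPlus (n : ℕ) (σ : Equiv.Perm (Fin n)) : Prop :=
  ∀ i : Fin n, ((i : ℕ) + (σ i : ℕ)) % 2 = 0

/-- Odd chessboard elements: `i + σ(i)` is odd for all `i`. -/
def chessMinus (n : ℕ) (σ : Equiv.Perm (Fin n)) : Prop :=
  ∀ i : Fin n, ((i : ℕ) + (σ i : ℕ)) % 2 = 1

/-- Signed generating function `∑ (-1)^{ℓ(σ)} x^{L(σ)}` over the permutations satisfying `P`. -/
noncomputable def gfA (n : ℕ) (P : Equiv.Perm (Fin n) → Prop) : Polynomial ℤ :=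
  ∑ σ : Equiv.Perm (Fin n),
    if P σ then (-1 : Polynomial ℤ) ^ (ellA n σ) * X ^ (oddLA n σ) else 0

/-! ### Auxiliary machinery -/

theorem Equiv.Perm.apply_inv_self {α : Type*} (f : Equiv.Perm α) (x : α) : f (f⁻¹ x) = x :=
  Equiv.apply_symm_apply f x

theorem Equiv.Perm.inv_apply_self {α : Type*} (f : Equiv.Perm α) (x : α) : f⁻¹ (f x) = x :=
  Equiv.symm_apply_apply f x

/-- Parity pattern of `σ⁻¹`. -/
def patF (n : ℕ) (σ : Equiv.Perm (Fin n)) (m : ℕ) : ℕ :=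
  if h : m < n then ((σ⁻¹ ⟨m, h⟩ : ℕ) % 2) else 0

lemma patF_eq (n : ℕ) (σ : Equiv.Perm (Fin n)) {m : ℕ} (h : m < n) :
    patF n σ m = (σ⁻¹ ⟨m, h⟩ : ℕ) % 2 := dif_pos h

def vkF (n k : ℕ) (hk : k + 1 < n) : Fin n := ⟨k, by omega⟩
def vk1F (n k : ℕ) (hk : k + 1 < n) : Fin n := ⟨k + 1, hk⟩

lemma swap_lt_iff {n k : ℕ} (hk : k + 1 < n) (u v : Fin n)
    (h1 : ¬(u = vkF n k hk ∧ v = vk1F n k hk))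
    (h2 : ¬(v = vkF n k hk ∧ u = vk1F n k hk)) :
    (Equiv.swap (vkF n k hk) (vk1F n k hk) u
      < Equiv.swap (vkF n k hk) (vk1F n k hk) v ↔ u < v) := by
  simp only [vkF, vk1F, Equiv.swap_apply_def, Fin.lt_def, Fin.ext_iff, Fin.val_mk,
    not_and] at *
  split_ifs <;> (try simp only [Fin.val_mk]) <;> omega

lemma chessPlus_iff_pat (n : ℕ) (σ : Equiv.Perm (Fin n)) :
    chessPlus n σ ↔ ∀ m : ℕ, ∀ h : m < n, (patF n σ m + m) % 2 = 0 := by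
  constructor
  · intro hσ m h
    have h2 := hσ (σ⁻¹ ⟨m, h⟩)
    rw [Equiv.Perm.apply_inv_self] at h2
    rw [patF_eq n σ h]
    simp only [Fin.val_mk] at h2 ⊢
    omega
  · intro h i
    have h2 := h (σ i) (σ i).isLt
    rw [patF_eq n σ (σ i).isLt] at h2
    simp only [Fin.eta, Equiv.Perm.inv_apply_self] at h2
    omega

lemma chessMinus_iff_pat (n : ℕ) (σ : Equiv.Perm (Fin n)) :
    chessMinus n σ ↔ ∀ m : ℕ, ∀ h : m < n, (patF n σ m + m) % 2 = 1 := by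
  constructor
  · intro hσ m h
    have h2 := hσ (σ⁻¹ ⟨m, h⟩)
    rw [Equiv.Perm.apply_inv_self] at h2
    rw [patF_eq n σ h]
    simp only [Fin.val_mk] at h2 ⊢
    omega
  · intro h i
    have h2 := h (σ i) (σ i).isLt
    rw [patF_eq n σ (σ i).isLt] at h2
    simp only [Fin.eta, Equiv.Perm.inv_apply_self] at h2
    omega

lemma chess_congr {n : ℕ} {σ τ : Equiv.Perm (Fin n)} (h : patF n τ = patF n σ) :
    (chessPlus n τ ∨ chessMinus n τ) ↔ (chessPlus n σ ∨ chessMinus n σ) := by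
  rw [chessPlus_iff_pat, chessMinus_iff_pat, chessPlus_iff_pat, chessMinus_iff_pat, h]

lemma patF_lt_two {n : ℕ} (σ : Equiv.Perm (Fin n)) {m : ℕ} (h : m < n) : patF n σ m < 2 := by
  rw [patF_eq n σ h]; omega

lemma exK {n : ℕ} (hn : 1 ≤ n) (σ : Equiv.Perm (Fin n))
    (h : ¬(chessPlus n σ ∨ chessMinus n σ)) :
    ∃ k : ℕ, k + 1 < n ∧ patF n σ k = patF n σ (k + 1) := by
  by_contra hc
  push_neg at hc
  have key : ∀ m : ℕ, m < n → patF n σ m = (patF n σ 0 + m) % 2 := by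
    intro m
    induction m with
    | zero => intro h0; have := patF_lt_two σ h0; omega
    | succ m ih =>
      intro hm
      have hm' : m < n := by omega
      have h1 := ih hm'
      have h2 := hc m hm
      have l1 := patF_lt_two σ hm'
      have l2 := patF_lt_two σ hm
      omega
  apply h
  have h0n : 0 < n := hn
  have hp2 := patF_lt_two σ h0n
  rcases (by omega : patF n σ 0 = 0 ∨ patF n σ 0 = 1) with h0 | h0
  · left
    rw [chessPlus_iff_pat]
    intro m hm
    have := key m hm
    omega
  · right
    rw [chessMinus_iff_pat]
    intro m hm
    have := key m hm
    omega

section Swap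

variable {n k : ℕ} (hk : k + 1 < n) (σ : Equiv.Perm (Fin n))

lemma hpar_unfold (hpar : patF n σ k = patF n σ (k + 1)) :
    ((σ⁻¹ (vkF n k hk) : Fin n) : ℕ) % 2 = ((σ⁻¹ (vk1F n k hk) : Fin n) : ℕ) % 2 := by
  rw [patF_eq n σ (show k < n by omega), patF_eq n σ hk] at hpar
  exact hpar

lemma pat_pres (hpar : patF n σ k = patF n σ (k + 1)) :
    patF n (Equiv.swap (vkF n k hk) (vk1F n k hk) * σ) = patF n σ := by
  have hpar' := hpar_unfold hk σ hpar
  funext m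
  by_cases h : m < n
  · rw [patF_eq _ _ h, patF_eq _ _ h]
    have hinv : (Equiv.swap (vkF n k hk) (vk1F n k hk) * σ)⁻¹ ⟨m, h⟩
        = σ⁻¹ (Equiv.swap (vkF n k hk) (vk1F n k hk) ⟨m, h⟩) := by
      rw [mul_inv_rev, Equiv.swap_inv, Equiv.Perm.mul_apply]
    rw [hinv]
    by_cases hmk : m = k
    · have : (⟨m, h⟩ : Fin n) = vkF n k hk := by simp [vkF, Fin.ext_iff, hmk]
      rw [this, Equiv.swap_apply_left]
      rw [patF_eq n σ (show k < n by omega), patF_eq n σ hk] at hpar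
      exact hpar.symm
    · by_cases hmk1 : m = k + 1
      · have : (⟨m, h⟩ : Fin n) = vk1F n k hk := by simp [vk1F, Fin.ext_iff, hmk1]
        rw [this, Equiv.swap_apply_right]
        rw [patF_eq n σ (show k < n by omega), patF_eq n σ hk] at hpar
        exact hpar
      · rw [Equiv.swap_apply_of_ne_of_ne]
        · simp [vkF, Fin.ext_iff, hmk]
        · simp [vk1F, Fin.ext_iff, hmk1]
  · simp [patF, h]

lemma quot_pres (I : Finset ℕ) (hpar : patF n σ k = patF n σ (k + 1))
    (hq : inQuotA n I σ) :
    inQuotA n I (Equiv.swap (vkF n k hk) (vk1F n k hk) * σ) := by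
  have hpar' := hpar_unfold hk σ hpar
  intro i j hj hi
  have h0 := hq i j hj hi
  show Equiv.swap (vkF n k hk) (vk1F n k hk) (σ i)
      < Equiv.swap (vkF n k hk) (vk1F n k hk) (σ j)
  rw [swap_lt_iff hk (σ i) (σ j)]
  · exact h0
  · rintro ⟨e1, e2⟩
    have hi' : i = σ⁻¹ (vkF n k hk) := by rw [← e1, Equiv.Perm.inv_apply_self]
    have hj' : j = σ⁻¹ (vk1F n k hk) := by rw [← e2, Equiv.Perm.inv_apply_self]
    rw [← hi', ← hj'] at hpar'
    omega
  · rintro ⟨e1, e2⟩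
    have hj' : j = σ⁻¹ (vkF n k hk) := by rw [← e1, Equiv.Perm.inv_apply_self]
    have hi' : i = σ⁻¹ (vk1F n k hk) := by rw [← e2, Equiv.Perm.inv_apply_self]
    rw [← hi', ← hj'] at hpar'
    omega

lemma inv_iff (p q : Fin n)
    (h1 : ¬(p = σ⁻¹ (vkF n k hk) ∧ q = σ⁻¹ (vk1F n k hk)))
    (h2 : ¬(p = σ⁻¹ (vk1F n k hk) ∧ q = σ⁻¹ (vkF n k hk))) :
    (Equiv.swap (vkF n k hk) (vk1F n k hk) (σ q)
      < Equiv.swap (vkF n k hk) (vk1F n k hk) (σ p) ↔ σ q < σ p) := by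
  rw [swap_lt_iff hk (σ q) (σ p)]
  · rintro ⟨e1, e2⟩
    exact h2 ⟨by rw [← e2, Equiv.Perm.inv_apply_self], by rw [← e1, Equiv.Perm.inv_apply_self]⟩
  · rintro ⟨e1, e2⟩
    exact h1 ⟨by rw [← e1, Equiv.Perm.inv_apply_self], by rw [← e2, Equiv.Perm.inv_apply_self]⟩

end Swap

section Swap2

variable {n k : ℕ} (hk : k + 1 < n) (σ : Equiv.Perm (Fin n))

lemma hvk_lt : vkF n k hk < vk1F n k hk := by
  simp [vkF, vk1F, Fin.mk_lt_mk]

lemma oddL_pres (hpar : patF n σ k = patF n σ (k + 1)) :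
    oddLA n (Equiv.swap (vkF n k hk) (vk1F n k hk) * σ) = oddLA n σ := by
  have hpar' := hpar_unfold hk σ hpar
  unfold oddLA
  congr 1
  ext ⟨p, q⟩
  simp only [mem_filter, mem_univ, true_and]
  simp only [Equiv.Perm.mul_apply]
  by_cases hpa : p = σ⁻¹ (vkF n k hk) ∧ q = σ⁻¹ (vk1F n k hk)
  · obtain ⟨rfl, rfl⟩ := hpa
    constructor
    · rintro ⟨-, -, h3⟩; exact absurd hpar' h3
    · rintro ⟨-, -, h3⟩; exact absurd hpar' h3
  · by_cases hpb : p = σ⁻¹ (vk1F n k hk) ∧ q = σ⁻¹ (vkF n k hk)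
    · obtain ⟨rfl, rfl⟩ := hpb
      constructor
      · rintro ⟨-, -, h3⟩; exact absurd hpar'.symm h3
      · rintro ⟨-, -, h3⟩; exact absurd hpar'.symm h3
    · rw [inv_iff hk σ p q hpa hpb]

lemma ell_flip (hpar : patF n σ k = patF n σ (k + 1)) :
    ((-1 : Polynomial ℤ) ^ ellA n (Equiv.swap (vkF n k hk) (vk1F n k hk) * σ))
      = -((-1 : Polynomial ℤ) ^ ellA n σ) := by
  have hpar' := hpar_unfold hk σ hpar
  obtain ⟨a, ha⟩ : ∃ x, x = σ⁻¹ (vkF n k hk) := ⟨_, rfl⟩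
  obtain ⟨b, hb⟩ : ∃ x, x = σ⁻¹ (vk1F n k hk) := ⟨_, rfl⟩
  rw [← ha, ← hb] at hpar'
  have hsa : σ a = vkF n k hk := by rw [ha, Equiv.Perm.apply_inv_self]
  have hsb : σ b = vk1F n k hk := by rw [hb, Equiv.Perm.apply_inv_self]
  have hvk : vkF n k hk < vk1F n k hk := hvk_lt hk
  have hab0 : a ≠ b := by
    rw [ha, hb]
    exact fun h => (ne_of_lt hvk) ((Equiv.injective σ⁻¹) h)
  have happ : ∀ x, (Equiv.swap (vkF n k hk) (vk1F n k hk) * σ) x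
      = Equiv.swap (vkF n k hk) (vk1F n k hk) (σ x) := fun _ => rfl
  show ((-1 : Polynomial ℤ) ^ (Finset.univ.filter (fun p : Fin n × Fin n =>
      p.1 < p.2 ∧ (Equiv.swap (vkF n k hk) (vk1F n k hk) * σ) p.2
        < (Equiv.swap (vkF n k hk) (vk1F n k hk) * σ) p.1)).card)
    = -((-1 : Polynomial ℤ) ^ (Finset.univ.filter (fun p : Fin n × Fin n =>
      p.1 < p.2 ∧ σ p.2 < σ p.1)).card)
  rcases hab0.lt_or_gt with hab | hab
  · -- a < b : new inversion set = insert (a,b) old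
    have hmem : (a, b) ∉ Finset.univ.filter (fun p : Fin n × Fin n =>
        p.1 < p.2 ∧ σ p.2 < σ p.1) := by
      simp only [mem_filter, mem_univ, true_and, hsa, hsb, not_and]
      intro _
      exact not_lt_of_gt hvk
    have hins : Finset.univ.filter (fun p : Fin n × Fin n =>
        p.1 < p.2 ∧ (Equiv.swap (vkF n k hk) (vk1F n k hk) * σ) p.2
          < (Equiv.swap (vkF n k hk) (vk1F n k hk) * σ) p.1)
        = insert (a, b) (Finset.univ.filter (fun p : Fin n × Fin n =>
            p.1 < p.2 ∧ σ p.2 < σ p.1)) := by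
      ext ⟨p, q⟩
      simp only [mem_filter, mem_univ, true_and, mem_insert, Prod.mk.injEq, happ]
      by_cases hpa : p = a ∧ q = b
      · rw [hpa.1, hpa.2]
        simp [hsa, hsb, hab, hvk]
      · by_cases hpb : p = b ∧ q = a
        · rw [hpb.1, hpb.2]
          have h1 : ¬ b < a := not_lt_of_gt hab
          have h2 : ¬ (b = a) := fun h => hab0 h.symm
          simp [h1, h2]
        · rw [inv_iff hk σ p q (by rw [← ha, ← hb]; exact hpa) (by
            rw [← ha, ← hb]
            exact hpb)]
          · constructor
            · intro h; right; exact h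
            · rintro (⟨h1, h2⟩ | h)
              · exact absurd ⟨h1, h2⟩ hpa
              · exact h
    rw [hins, card_insert_of_notMem hmem, pow_succ]
    ring
  · -- b < a : new inversion set = erase (b,a) old
    have hmem : (b, a) ∈ Finset.univ.filter (fun p : Fin n × Fin n =>
        p.1 < p.2 ∧ σ p.2 < σ p.1) := by
      simp only [mem_filter, mem_univ, true_and, hsa, hsb]
      exact ⟨hab, hvk⟩
    have hins : Finset.univ.filter (fun p : Fin n × Fin n =>
        p.1 < p.2 ∧ (Equiv.swap (vkF n k hk) (vk1F n k hk) * σ) p.2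
          < (Equiv.swap (vkF n k hk) (vk1F n k hk) * σ) p.1)
        = (Finset.univ.filter (fun p : Fin n × Fin n =>
            p.1 < p.2 ∧ σ p.2 < σ p.1)).erase (b, a) := by
      ext ⟨p, q⟩
      simp only [mem_filter, mem_univ, true_and, mem_erase, Prod.mk.injEq, ne_eq, not_and,
        happ]
      by_cases hpb : p = b ∧ q = a
      · rw [hpb.1, hpb.2]
        simp [hsa, hsb, not_lt_of_gt hvk]
      · by_cases hpa : p = a ∧ q = b
        · rw [hpa.1, hpa.2]
          have h1 : ¬ a < b := not_lt_of_gt hab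
          simp [h1, hab0]
        · rw [inv_iff hk σ p q (by rw [← ha, ← hb]; exact hpa) (by
            rw [← ha, ← hb]
            exact hpb)]
          · constructor
            · intro h
              exact ⟨fun h1 h2 => hpb ⟨h1, h2⟩, h⟩
            · rintro ⟨-, h⟩; exact h
    have hc := Finset.card_erase_add_one hmem
    rw [hins, ← hc, pow_succ]
    ring

end Swap2

/-- The predicate whose witness gives the swap position. -/
def PkP (n : ℕ) (σ : Equiv.Perm (Fin n)) (k : ℕ) : Prop :=
  k + 1 < n ∧ patF n σ k = patF n σ (k + 1)

/-- The sign-reversing involution. -/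
noncomputable def iotaF (n : ℕ) (σ : Equiv.Perm (Fin n)) (h : ∃ k, PkP n σ k) :
    Equiv.Perm (Fin n) :=
  Equiv.swap (vkF n (Nat.find h) (Nat.find_spec h).1)
    (vk1F n (Nat.find h) (Nat.find_spec h).1) * σ

lemma iotaF_pat (n : ℕ) (σ : Equiv.Perm (Fin n)) (h : ∃ k, PkP n σ k) :
    patF n (iotaF n σ h) = patF n σ :=
  pat_pres (Nat.find_spec h).1 σ (Nat.find_spec h).2

lemma iotaF_exists (n : ℕ) (σ : Equiv.Perm (Fin n)) (h : ∃ k, PkP n σ k) :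
    ∃ k, PkP n (iotaF n σ h) k := by
  obtain ⟨k, hk1, hk2⟩ := h
  exact ⟨k, hk1, by rw [show patF n (iotaF n σ _) = patF n σ from iotaF_pat n σ _]; exact hk2⟩

lemma iotaF_find (n : ℕ) (σ : Equiv.Perm (Fin n)) (h : ∃ k, PkP n σ k)
    (h' : ∃ k, PkP n (iotaF n σ h) k) : Nat.find h' = Nat.find h := by
  have hp : ∀ m, PkP n (iotaF n σ h) m ↔ PkP n σ m := by
    intro m
    unfold PkP
    rw [iotaF_pat n σ h]
  apply le_antisymm
  · exact Nat.find_le ((hp _).mpr (Nat.find_spec h))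
  · exact Nat.find_le ((hp _).mp (Nat.find_spec h'))

lemma iotaF_invol (n : ℕ) (σ : Equiv.Perm (Fin n)) (h : ∃ k, PkP n σ k)
    (h' : ∃ k, PkP n (iotaF n σ h) k) : iotaF n (iotaF n σ h) h' = σ := by
  have hfind := iotaF_find n σ h h'
  rw [iotaF]
  have hv : vkF n (Nat.find h') (Nat.find_spec h').1
      = vkF n (Nat.find h) (Nat.find_spec h).1 := by
    simp [vkF, Fin.ext_iff, hfind]
  have hv1 : vk1F n (Nat.find h') (Nat.find_spec h').1
      = vk1F n (Nat.find h) (Nat.find_spec h).1 := by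
    simp [vk1F, Fin.ext_iff, hfind]
  rw [hv, hv1, iotaF, ← mul_assoc, Equiv.swap_mul_self, one_mul]

lemma iotaF_ne (n : ℕ) (σ : Equiv.Perm (Fin n)) (h : ∃ k, PkP n σ k) :
    iotaF n σ h ≠ σ := by
  intro he
  set vk := vkF n (Nat.find h) (Nat.find_spec h).1
  set vk1 := vk1F n (Nat.find h) (Nat.find_spec h).1
  have h2 := DFunLike.congr_fun he (σ⁻¹ vk)
  have h3 : iotaF n σ h (σ⁻¹ vk) = vk1 := by
    show Equiv.swap vk vk1 (σ (σ⁻¹ vk)) = vk1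
    rw [Equiv.Perm.apply_inv_self, Equiv.swap_apply_left]
  rw [h3, Equiv.Perm.apply_inv_self] at h2
  exact (ne_of_lt (hvk_lt (Nat.find_spec h).1)) h2.symm

/-- For all `n ∈ ℙ` and `I ⊆ [n-1]`, the signed generating function over
`S_n^I` equals the one over the chessboard elements `C_n^I` of the quotient. -/
theorem statement3 (n : ℕ) (hn : 1 ≤ n) (I : Finset ℕ) (hI : I ⊆ Finset.Icc 1 (n - 1)) :
    gfA n (fun σ => inQuotA n I σ) =
      gfA n (fun σ => (chessPlus n σ ∨ chessMinus n σ) ∧ inQuotA n I σ) := by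
  set t : Equiv.Perm (Fin n) → Polynomial ℤ :=
    fun σ => (-1 : Polynomial ℤ) ^ (ellA n σ) * X ^ (oddLA n σ) with ht
  set B : Finset (Equiv.Perm (Fin n)) :=
    Finset.univ.filter (fun σ => inQuotA n I σ ∧ ¬(chessPlus n σ ∨ chessMinus n σ)) with hB
  have hex : ∀ σ ∈ B, ∃ k, PkP n σ k := by
    intro σ hσ
    rw [hB, mem_filter] at hσ
    exact exK hn σ hσ.2.2
  have hcancel : ∑ σ ∈ B, t σ = 0 := by
    apply Finset.sum_involution (fun σ hσ => iotaF n σ (hex σ hσ))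
    · intro σ hσ
      have hspec := Nat.find_spec (hex σ hσ)
      show t σ + t (iotaF n σ (hex σ hσ)) = 0
      rw [ht]
      simp only
      rw [show iotaF n σ (hex σ hσ) = Equiv.swap (vkF n (Nat.find (hex σ hσ)) hspec.1)
          (vk1F n (Nat.find (hex σ hσ)) hspec.1) * σ from rfl,
        ell_flip hspec.1 σ hspec.2, oddL_pres hspec.1 σ hspec.2]
      ring
    · intro σ hσ _
      exact iotaF_ne n σ (hex σ hσ)
    · intro σ hσ
      exact iotaF_invol n σ (hex σ hσ) _
    · intro σ hσ
      have hspec := Nat.find_spec (hex σ hσ)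
      have hσ' := hσ
      rw [hB, mem_filter] at hσ'
      rw [hB, mem_filter]
      refine ⟨mem_univ _, ?_, ?_⟩
      · exact quot_pres hspec.1 σ I hspec.2 hσ'.2.1
      · rw [chess_congr (iotaF_pat n σ (hex σ hσ))]
        exact hσ'.2.2
  have hsplit : ∀ σ : Equiv.Perm (Fin n),
      (if inQuotA n I σ then t σ else 0)
        = (if (chessPlus n σ ∨ chessMinus n σ) ∧ inQuotA n I σ then t σ else 0)
          + (if inQuotA n I σ ∧ ¬(chessPlus n σ ∨ chessMinus n σ) then t σ else 0) := by
    intro σ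
    by_cases h1 : inQuotA n I σ <;> by_cases h2 : chessPlus n σ ∨ chessMinus n σ <;>
      simp [h1, h2]
  unfold gfA
  rw [Finset.sum_congr rfl (fun σ _ => hsplit σ), Finset.sum_add_distrib]
  have hBsum : (∑ σ : Equiv.Perm (Fin n),
      if inQuotA n I σ ∧ ¬(chessPlus n σ ∨ chessMinus n σ) then t σ else 0)
      = ∑ σ ∈ B, t σ := by
    rw [hB, Finset.sum_filter]
  rw [hBsum, hcancel, add_zero]
  apply Finset.sum_congr rfl
  intro σ _
  rcases Classical.em ((chessPlus n σ ∨ chessMinus n σ) ∧ inQuotA n I σ) with h | h <;>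
    simp [h, ht]
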